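/- Let X be the constructed set and let X_1, ..., X_r be a Tverberg partition of X with Tverberg point p ∈ ℝ^d. Then p = 0; that is, the origin is the only possible Tverberg point of X. -/
import Mathlib


open Finset Set

/-- The standard basis vector `e^j` of `ℝ^d`. -/
noncomputable def stdVec (d : ℕ) (j : Fin d) : Fin d → ℝ := Pi.single j 1

/-- The set `A_j = {e^j, 2e^j, ..., (r-1)e^j}`. -/
def Aset (d r : ℕ) (j : Fin d) : Set (Fin d → ℝ) :=
  {v | ∃ k : ℕ, 1 ≤ k ∧ k ≤ r - 1 ∧ v = (k : ℝ) • stdVec d j}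

/-- The point `x^i`, with `x^i_j = 0` if `i = i(j)` and `x^i_j = -i` otherwise
(indices taken in `{1,...,r}`, so `Fin r` index `i` corresponds to `i+1`). -/
def xpt (d r : ℕ) (ι : Fin d → Fin r) (i : Fin r) : Fin d → ℝ :=
  fun j => if ι j = i then 0 else -((i : ℕ) + 1 : ℝ)

/-- The set `A = {x^1, ..., x^r}`. -/
def Apts (d r : ℕ) (ι : Fin d → Fin r) : Set (Fin d → ℝ) := Set.range (xpt d r ι)

/-- The constructed set `X = A ∪ A_1 ∪ ⋯ ∪ A_d`. -/
def Xset (d r : ℕ) (ι : Fin d → Fin r) : Set (Fin d → ℝ) :=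
  Apts d r ι ∪ ⋃ j, Aset d r j

/-- `P : Fin r → Set (Fin d → ℝ)` is a Tverberg partition of `X`:
a partition of `X` into pairwise disjoint parts whose convex hulls share a point. -/
def IsTverbergPartition (d r : ℕ) (X : Set (Fin d → ℝ))
    (P : Fin r → Set (Fin d → ℝ)) : Prop :=
  (⋃ i, P i) = X ∧ (∀ i i', i ≠ i' → Disjoint (P i) (P i')) ∧
    ∃ p : Fin d → ℝ, ∀ i, p ∈ convexHull ℝ (P i)


lemma exists_mem_pos' {d : ℕ} {s : Set (Fin d → ℝ)} {p : Fin d → ℝ} {j : Fin d}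
    (hp : p ∈ convexHull ℝ s) (h : 0 < p j) : ∃ x ∈ s, 0 < x j := by
  by_contra hc
  push_neg at hc
  have hsub : s ⊆ {x : Fin d → ℝ | x j ≤ 0} := fun x hx => hc x hx
  have hcv : Convex ℝ {x : Fin d → ℝ | x j ≤ 0} :=
    convex_halfSpace_le ⟨fun a b => rfl, fun c a => rfl⟩ 0
  have := convexHull_min hsub hcv hp
  exact absurd this (by simpa using h.not_ge)

lemma exists_mem_neg' {d : ℕ} {s : Set (Fin d → ℝ)} {p : Fin d → ℝ} {j : Fin d}
    (hp : p ∈ convexHull ℝ s) (h : p j < 0) : ∃ x ∈ s, x j < 0 := by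
  by_contra hc
  push_neg at hc
  have hsub : s ⊆ {x : Fin d → ℝ | 0 ≤ x j} := fun x hx => hc x hx
  have hcv : Convex ℝ {x : Fin d → ℝ | 0 ≤ x j} :=
    convex_halfSpace_ge ⟨fun a b => rfl, fun c a => rfl⟩ 0
  have := convexHull_min hsub hcv hp
  exact absurd this h.not_ge

/-- Lemma 3.1: for the constructed set `X`, the only Tverberg point is the origin. -/
theorem tverberg_point_eq_zero (d r : ℕ) (hd : 1 ≤ d) (hr : 1 ≤ r)
    (a : Fin r → ℕ) (hpos : ∀ i, 1 ≤ a i) (hle : ∀ i, a i ≤ d + 1)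
    (hsum : ∑ i, a i = (d + 1) * (r - 1) + 1)
    (ι : Fin d → Fin r)
    (hι : ∀ i, (Finset.univ.filter fun j => ι j = i).card = d + 1 - a i)
    (P : Fin r → Set (Fin d → ℝ))
    (hunion : (⋃ i, P i) = Xset d r ι)
    (hdisj : ∀ i i', i ≠ i' → Disjoint (P i) (P i'))
    (p : Fin d → ℝ) (hp : ∀ i, p ∈ convexHull ℝ (P i)) :
    p = 0 := by
  funext j
  simp only [Pi.zero_apply]
  by_contra hpj
  have hmem : ∀ i, P i ⊆ Xset d r ι := fun i => hunion ▸ Set.subset_iUnion P i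
  rcases lt_or_gt_of_ne hpj with hneg | hpos
  · -- p j < 0 : every part contains some xpt i' with ι j ≠ i'
    have hx : ∀ i : Fin r, ∃ x, x ∈ P i ∧ x j < 0 := by
      intro i
      obtain ⟨x, hx1, hx2⟩ := exists_mem_neg' (hp i) hneg
      exact ⟨x, hx1, hx2⟩
    choose x hxP hxneg using hx
    have hxA : ∀ i, ∃ i' : Fin r, i' ≠ ι j ∧ x i = xpt d r ι i' := by
      intro i
      rcases hmem i (hxP i) with h | h
      · rcases h with ⟨i', heq⟩
        refine ⟨i', ?_, heq.symm⟩
        intro heq2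
        have h0 : xpt d r ι i' j = 0 := by simp [xpt, heq2]
        have := hxneg i
        rw [← heq] at this
        linarith
      · exfalso
        rcases Set.mem_iUnion.1 h with ⟨j', k, hk1, hk2, hxk⟩
        have h0 : 0 ≤ x i j := by
          rw [hxk]
          simp only [Pi.smul_apply, smul_eq_mul, stdVec, Pi.single_apply]
          split <;> simp
        have := hxneg i
        linarith
    choose g hg1 hg2 using hxA
    have hxinj : Function.Injective x := by
      intro i1 i2 h
      by_contra hne
      exact Set.disjoint_left.1 (hdisj i1 i2 hne) (hxP i1) (h ▸ hxP i2)
    set T : Finset (Fin d → ℝ) :=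
      (Finset.univ.erase (ι j)).image (xpt d r ι) with hT
    have hsub : Finset.univ.image x ⊆ T := by
      intro y hy
      rcases Finset.mem_image.1 hy with ⟨i, -, rfl⟩
      exact Finset.mem_image.2 ⟨g i, Finset.mem_erase.2 ⟨hg1 i, Finset.mem_univ _⟩,
        (hg2 i).symm⟩
    have h1 : r ≤ T.card := by
      have := Finset.card_le_card hsub
      rwa [Finset.card_image_of_injective _ hxinj, Finset.card_univ,
        Fintype.card_fin] at this
    have h2 : T.card ≤ r - 1 := by
      refine le_trans Finset.card_image_le ?_
      simp [Finset.card_erase_of_mem]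
    omega
  · -- p j > 0 : every part contains a point of A_j
    have hx : ∀ i : Fin r, ∃ x, x ∈ P i ∧ 0 < x j := by
      intro i
      obtain ⟨x, hx1, hx2⟩ := exists_mem_pos' (hp i) hpos
      exact ⟨x, hx1, hx2⟩
    choose x hxP hxpos using hx
    have hxA : ∀ i, ∃ k : ℕ, 1 ≤ k ∧ k ≤ r - 1 ∧ x i = (k : ℝ) • stdVec d j := by
      intro i
      rcases hmem i (hxP i) with h | h
      · exfalso
        rcases h with ⟨i', heq⟩
        have hc : (0:ℝ) ≤ ((i' : ℕ) : ℝ) := Nat.cast_nonneg _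
        have h0 : xpt d r ι i' j ≤ 0 := by
          simp only [xpt]
          split
          · exact le_refl 0
          · linarith
        have := hxpos i
        rw [← heq] at this
        linarith
      · rcases Set.mem_iUnion.1 h with ⟨j', k, hk1, hk2, hxk⟩
        have hjj : j' = j := by
          by_contra hne
          have h0 : x i j = 0 := by
            rw [hxk]
            simp [stdVec, Pi.single_apply, Ne.symm hne]
          have := hxpos i
          linarith
        subst hjj
        exact ⟨k, hk1, hk2, hxk⟩
    choose k hk1 hk2 hk3 using hxA
    have hxinj : Function.Injective x := by
      intro i1 i2 h
      by_contra hne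
      exact Set.disjoint_left.1 (hdisj i1 i2 hne) (hxP i1) (h ▸ hxP i2)
    set T : Finset (Fin d → ℝ) :=
      (Finset.Icc 1 (r - 1)).image (fun k : ℕ => (k : ℝ) • stdVec d j) with hT
    have hsub : Finset.univ.image x ⊆ T := by
      intro y hy
      rcases Finset.mem_image.1 hy with ⟨i, -, rfl⟩
      exact Finset.mem_image.2 ⟨k i, Finset.mem_Icc.2 ⟨hk1 i, hk2 i⟩, (hk3 i).symm⟩
    have h1 : r ≤ T.card := by
      have := Finset.card_le_card hsub
      rwa [Finset.card_image_of_injective _ hxinj, Finset.card_univ,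
        Fintype.card_fin] at this
    have h2 : T.card ≤ r - 1 := by
      refine le_trans Finset.card_image_le ?_
      simp [Nat.card_Icc]
    omega
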